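/- Let a, b, c, d be positive real numbers. Then for every real r, if r ≤ a + b·ln(c + d·r), then r ≤ 2a + 2b·ln(1 + 2c + 2bd). -/

import Mathlib

/-- For positive reals `a, b, c, d` and every real `r`:
if `r ≤ a + b ln(c + d r)` then `r ≤ 2a + 2b ln(1 + 2c + 2bd)`. -/
theorem log_inequality_inversion (a b c d : ℝ) (ha : 0 < a) (hb : 0 < b) (hc : 0 < c)
    (hd : 0 < d) (r : ℝ) (h : r ≤ a + b * Real.log (c + d * r)) :
    r ≤ 2 * a + 2 * b * Real.log (1 + 2 * c + 2 * b * d) := by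
  set M := 1 + 2 * c + 2 * b * d with hM
  have hM1 : 1 < M := by nlinarith
  have hlogM : 0 < Real.log M := Real.log_pos hM1
  rcases le_or_gt r 0 with hr | hr
  · nlinarith
  rcases le_or_gt (c + d * r) M with hcase | hcase
  · have h1 : Real.log (c + d * r) ≤ Real.log M := by
      apply Real.log_le_log (by positivity) hcase
    nlinarith
  · have h2 : c + d * r ≤ 2 * d * r := by nlinarith
    have h3 : Real.log (c + d * r) ≤ Real.log (2 * d * r) :=
      Real.log_le_log (by positivity) h2
    have h4 : Real.log (2 * d * r) = Real.log (2 * d) + Real.log r :=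
      Real.log_mul (by positivity) (ne_of_gt hr)
    have h5 : Real.log r = Real.log (r / (2 * b)) + Real.log (2 * b) := by
      rw [Real.log_div (ne_of_gt hr) (by positivity)]; ring
    have h6 : Real.log (r / (2 * b)) ≤ r / (2 * b) - 1 :=
      Real.log_le_sub_one_of_pos (by positivity)
    have hbr : b * (r / (2 * b)) = r / 2 := by
      field_simp
    have h7 : r ≤ 2 * a + 2 * b * (Real.log (2 * d) + Real.log (2 * b) - 1) := by
      have : r ≤ a + b * (Real.log (2 * d) + (r / (2 * b) - 1 + Real.log (2 * b))) := by
        calc r ≤ a + b * Real.log (c + d * r) := h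
        _ ≤ _ := by
          have : Real.log (c + d * r) ≤ Real.log (2 * d) + (r / (2 * b) - 1 + Real.log (2 * b)) := by
            rw [h4] at h3; linarith [h5 ▸ h3]
          nlinarith
      nlinarith [this, hbr]
    have heq : (2 * d) * (2 * b) = (2 * b * d) * 2 := by ring
    have h8 : Real.log (2 * d) + Real.log (2 * b) = Real.log (2 * b * d) + Real.log 2 := by
      rw [← Real.log_mul (by positivity) (by positivity), heq,
        Real.log_mul (by positivity) (by norm_num)]
    have h9 : Real.log (2 * b * d) ≤ Real.log M :=
      Real.log_le_log (by positivity) (by nlinarith)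
    have h10 : Real.log 2 ≤ 1 := Real.log_two_lt_d9.le.trans (by norm_num)
    nlinarith [h7, h8, h9, h10]
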